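/- Let π = (π_1,…,π_K) be a probability vector with π_k > 0 for all k, and let ν_1,…,ν_K ∈ ℝ^d span ℝ^d and satisfy ν_k^T ν_j ∈ (0,1) for all k, j. Set Δ = Σ_{k=1}^K π_k ν_k ν_k^T and, for x_0 ∈ ℝ^d, Σ(x_0) = Δ^{-1} (Σ_{j=1}^K π_j ν_j ν_j^T (x_0^T ν_j − (x_0^T ν_j)^2)) Δ^{-1}. Then for each k ∈ {1,…,K}, the matrix Σ(ν_k) is symmetric positive definite. -/

import Mathlib

open Matrix

lemma sum_rank_one_posDef {K d : ℕ} (c : Fin K → ℝ) (hc : ∀ m, 0 < c m)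
    (ν : Fin K → Fin d → ℝ)
    (hspan : Submodule.span ℝ (Set.range ν) = ⊤) :
    (∑ m, c m • Matrix.vecMulVec (ν m) (ν m)).PosDef := by
  rw [posDef_iff_dotProduct_mulVec]
  constructor
  · unfold Matrix.IsHermitian
    rw [conjTranspose_sum]
    refine Finset.sum_congr rfl fun m _ => ?_
    ext i j
    simp [Matrix.vecMulVec_apply, mul_comm]
  · intro x hx
    have hmv : ∀ m : Fin K, (Matrix.vecMulVec (ν m) (ν m)) *ᵥ x = (ν m ⬝ᵥ x) • ν m := by
      intro m
      ext i
      simp only [Matrix.mulVec, Matrix.vecMulVec_apply, dotProduct, Pi.smul_apply,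
        smul_eq_mul, Finset.sum_mul]
      exact Finset.sum_congr rfl fun j _ => by ring
    have hform : (star x) ⬝ᵥ ((∑ m, c m • Matrix.vecMulVec (ν m) (ν m)) *ᵥ x)
        = ∑ m, c m * (ν m ⬝ᵥ x) ^ 2 := by
      have hsum : (∑ m, c m • Matrix.vecMulVec (ν m) (ν m)) *ᵥ x
          = ∑ m, (c m • Matrix.vecMulVec (ν m) (ν m)) *ᵥ x := by
        ext i
        simp only [Matrix.mulVec, dotProduct, Finset.sum_apply, Matrix.sum_apply,
          Finset.sum_mul]
        exact Finset.sum_comm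
      have hdsum : ∀ (f : Fin K → Fin d → ℝ), star x ⬝ᵥ (∑ m, f m) = ∑ m, star x ⬝ᵥ f m := by
        intro f
        simp only [dotProduct, Finset.sum_apply, Finset.mul_sum]
        exact Finset.sum_comm
      rw [hsum, hdsum]
      refine Finset.sum_congr rfl fun m _ => ?_
      rw [Matrix.smul_mulVec, hmv m, dotProduct_smul, dotProduct_smul]
      have : star x ⬝ᵥ ν m = ν m ⬝ᵥ x := by
        simp [dotProduct, mul_comm]
      rw [this]
      simp only [smul_eq_mul]
      ring
    rw [hform]
    -- positivity: each term nonneg; if all zero, x = 0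
    have hnonneg : ∀ m ∈ Finset.univ, 0 ≤ c m * (ν m ⬝ᵥ x) ^ 2 := fun m _ =>
      mul_nonneg (hc m).le (sq_nonneg _)
    rcases eq_or_lt_of_le (Finset.sum_nonneg hnonneg) with h0 | h
    · exfalso
      have hall : ∀ m : Fin K, ν m ⬝ᵥ x = 0 := by
        intro m
        have := (Finset.sum_eq_zero_iff_of_nonneg hnonneg).mp h0.symm m (Finset.mem_univ m)
        have := (mul_eq_zero.mp this).resolve_left (hc m).ne'
        exact pow_eq_zero_iff (two_ne_zero) |>.mp this
      -- x is orthogonal to span of ν's = ⊤, so x ⬝ᵥ x = 0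
      have hsub : ∀ y : Fin d → ℝ, y ∈ Submodule.span ℝ (Set.range ν) → y ⬝ᵥ x = 0 := by
        intro y hy
        induction hy using Submodule.span_induction with
        | mem y hy => obtain ⟨m, rfl⟩ := hy; exact hall m
        | zero => simp
        | add a b _ _ ha hb => rw [add_dotProduct, ha, hb, add_zero]
        | smul r a _ ha => rw [smul_dotProduct, ha, smul_zero]
      have : x ⬝ᵥ x = 0 := hsub x (hspan ▸ Submodule.mem_top)
      exact hx (dotProduct_self_eq_zero.mp this)
    · exact h

/-- Under the stochastic blockmodel assumptions (positive mixture weights, latent positions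
`ν₁, …, ν_K` spanning `ℝ^d`, and block probabilities `νₖᵀνⱼ ∈ (0,1)`), the ASE limiting
covariance matrix `Σ(νₖ) = Δ⁻¹ (Σⱼ πⱼ νⱼνⱼᵀ (νₖᵀνⱼ - (νₖᵀνⱼ)²)) Δ⁻¹`, where
`Δ = Σₖ πₖ νₖνₖᵀ`, is symmetric positive definite for each `k`. -/
theorem ase_limit_covariance_posDef {K d : ℕ}
    (π : Fin K → ℝ) (hπ : ∀ k, 0 < π k) (hπsum : ∑ k, π k = 1)
    (ν : Fin K → Fin d → ℝ)
    (hspan : Submodule.span ℝ (Set.range ν) = ⊤)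
    (hB : ∀ k j, ν k ⬝ᵥ ν j ∈ Set.Ioo (0 : ℝ) 1) :
    ∀ k : Fin K,
      ((∑ m, π m • Matrix.vecMulVec (ν m) (ν m))⁻¹ *
          (∑ j, (π j * (ν k ⬝ᵥ ν j - (ν k ⬝ᵥ ν j) ^ 2)) • Matrix.vecMulVec (ν j) (ν j)) *
          (∑ m, π m • Matrix.vecMulVec (ν m) (ν m))⁻¹).PosDef := by
  intro k
  set Δ := ∑ m, π m • Matrix.vecMulVec (ν m) (ν m) with hΔ
  have hΔpd : Δ.PosDef := sum_rank_one_posDef π hπ ν hspan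
  have hSpd : (∑ j, (π j * (ν k ⬝ᵥ ν j - (ν k ⬝ᵥ ν j) ^ 2)) •
      Matrix.vecMulVec (ν j) (ν j)).PosDef := by
    refine sum_rank_one_posDef _ (fun j => ?_) ν hspan
    have h := hB k j
    have h1 : 0 < ν k ⬝ᵥ ν j - (ν k ⬝ᵥ ν j) ^ 2 := by nlinarith [h.1, h.2]
    exact mul_pos (hπ j) h1
  have hΔinv : (Δ⁻¹).PosDef := hΔpd.inv
  set S := ∑ j, (π j * (ν k ⬝ᵥ ν j - (ν k ⬝ᵥ ν j) ^ 2)) • Matrix.vecMulVec (ν j) (ν j)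
  -- Δ⁻¹ S Δ⁻¹ = Δ⁻¹ S (Δ⁻¹)ᴴ
  have hherm : (Δ⁻¹)ᴴ = Δ⁻¹ := hΔinv.isHermitian
  have hunit : IsUnit Δ⁻¹ := hΔinv.isUnit
  have key : (Δ⁻¹ * S * Δ⁻¹).PosDef := by
    rw [posDef_iff_dotProduct_mulVec]
    constructor
    · show (Δ⁻¹ * S * Δ⁻¹)ᴴ = _
      rw [conjTranspose_mul, conjTranspose_mul, hherm, hSpd.isHermitian.eq, Matrix.mul_assoc]
    · intro x hx
      have hmv : (Δ⁻¹ * S * Δ⁻¹) *ᵥ x = Δ⁻¹ *ᵥ (S *ᵥ (Δ⁻¹ *ᵥ x)) := by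
        rw [← Matrix.mulVec_mulVec, ← Matrix.mulVec_mulVec]
      rw [hmv]
      have hy : Δ⁻¹ *ᵥ x ≠ 0 := by
        intro h
        apply hx
        have := congrArg (fun v => Δ *ᵥ v) h
        simpa [Matrix.mulVec_mulVec, Matrix.mul_nonsing_inv _
          (Matrix.isUnit_iff_isUnit_det _ |>.mp hΔpd.isUnit)] using this
      have : star x ⬝ᵥ (Δ⁻¹ *ᵥ (S *ᵥ (Δ⁻¹ *ᵥ x)))
          = star (Δ⁻¹ *ᵥ x) ⬝ᵥ (S *ᵥ (Δ⁻¹ *ᵥ x)) := by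
        rw [Matrix.dotProduct_mulVec]
        congr 1
        rw [Matrix.star_mulVec, hherm]
      rw [this]
      exact hSpd.dotProduct_mulVec_pos hy
  exact key
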